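/- Let F = ∪_{i=1}^k S_{d_i} be a star forest with k ≥ 2 and d_1 ≥ ⋯ ≥ d_k ≥ 1. If H is a graph of order n-k+1 with maximum degree Δ(H) ≤ d_k - 1, then the join G = K_{k-1} ∇ H is F-free. -/

import Mathlib

open SimpleGraph

attribute [local instance] Classical.propDecidable

/-- The star forest `⋃ i, S_(d i)`; in component `i` the vertex `0` is the center. -/
def starForest (k : ℕ) (d : Fin k → ℕ) : SimpleGraph (Σ i : Fin k, Fin (d i + 1)) where
  Adj x y := x.1 = y.1 ∧ x ≠ y ∧ ((x.2 : ℕ) = 0 ∨ (y.2 : ℕ) = 0)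
  symm := by constructor; rintro x y ⟨h1, h2, h3⟩; exact ⟨h1.symm, h2.symm, h3.symm⟩
  loopless := by constructor; rintro x ⟨_, h, _⟩; exact h rfl

/-- `G` contains a copy of `F` as a subgraph. -/
def Contains {V W : Type*} (G : SimpleGraph V) (F : SimpleGraph W) : Prop :=
  ∃ f : W ↪ V, ∀ ⦃a b⦄, F.Adj a b → G.Adj (f a) (f b)

/-- The join `G ∇ H`: every vertex of `G` is joined to every vertex of `H`. -/
def joinGraph {V W : Type*} (G : SimpleGraph V) (H : SimpleGraph W) :
    SimpleGraph (V ⊕ W) where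
  Adj x y :=
    match x, y with
    | Sum.inl a, Sum.inl b => G.Adj a b
    | Sum.inr a, Sum.inr b => H.Adj a b
    | Sum.inl _, Sum.inr _ => True
    | Sum.inr _, Sum.inl _ => True
  symm := by constructor; rintro (a | a) (b | b) h <;> simp_all [SimpleGraph.adj_comm]
  loopless := by constructor; rintro (a | a) h <;> simp_all

theorem stmt14 (k n : ℕ) (hk : 2 ≤ k) (d : Fin k → ℕ)
    (hmono : ∀ i j : Fin k, i ≤ j → d j ≤ d i) (hd : ∀ i, 1 ≤ d i)
    (H : SimpleGraph (Fin (n - k + 1)))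
    (hΔ : ∀ v, H.degree v ≤ d ⟨k - 1, by omega⟩ - 1) :
    ¬ Contains (joinGraph (completeGraph (Fin (k - 1))) H) (starForest k d) := by
  rintro ⟨f, hf⟩
  -- every component has a vertex mapped to the `inl` side
  have key : ∀ i : Fin k, ∃ x : Fin (d i + 1), ∃ a, f ⟨i, x⟩ = Sum.inl a := by
    intro i
    by_contra hcon
    push_neg at hcon
    have hw : ∀ x : Fin (d i + 1), ∃ w, f ⟨i, x⟩ = Sum.inr w := by
      intro x
      cases hfx : f ⟨i, x⟩ with
      | inl a => exact absurd hfx (hcon x a)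
      | inr w => exact ⟨w, rfl⟩
    choose w hw using hw
    have hwinj : Function.Injective w := by
      intro x y hxy
      have h2 : f ⟨i, x⟩ = f ⟨i, y⟩ := by rw [hw x, hw y, hxy]
      simpa using f.injective h2
    have hadj : ∀ x : Fin (d i + 1), (x : ℕ) ≠ 0 → H.Adj (w 0) (w x) := by
      intro x hx
      have hne : (⟨i, 0⟩ : Σ j : Fin k, Fin (d j + 1)) ≠ ⟨i, x⟩ := by
        intro h
        have := (Sigma.mk.inj_iff.mp h).2
        have : (0 : Fin (d i + 1)) = x := eq_of_heq this
        exact hx (by simp [← this])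
      have hF : (starForest k d).Adj ⟨i, 0⟩ ⟨i, x⟩ := ⟨rfl, hne, Or.inl (by simp)⟩
      have h2 := hf hF
      rw [hw 0, hw x] at h2
      exact h2
    have hsub : (Finset.univ.erase (0 : Fin (d i + 1))).image w ⊆
        H.neighborFinset (w 0) := by
      intro y hy
      rw [Finset.mem_image] at hy
      obtain ⟨x, hx, rfl⟩ := hy
      rw [SimpleGraph.mem_neighborFinset]
      exact hadj x (by
        intro h0
        exact (Finset.mem_erase.mp hx).1 (by
          ext
          simpa using h0))
    have hcard : d i ≤ H.degree (w 0) := by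
      have h3 := Finset.card_le_card hsub
      rwa [Finset.card_image_of_injective _ hwinj,
        Finset.card_erase_of_mem (Finset.mem_univ _), Finset.card_univ,
        Fintype.card_fin, Nat.add_sub_cancel,
        H.card_neighborFinset_eq_degree] at h3
    have hle : (i : ℕ) ≤ k - 1 := by omega
    have hdk : d ⟨k - 1, by omega⟩ ≤ d i := hmono i ⟨k - 1, by omega⟩ hle
    have h4 := hΔ (w 0)
    have h5 := hd ⟨k - 1, by omega⟩
    omega
  choose x a ha using key
  have hainj : Function.Injective a := by
    intro i j hij
    have h2 : f ⟨i, x i⟩ = f ⟨j, x j⟩ := by rw [ha i, ha j, hij]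
    exact congrArg Sigma.fst (f.injective h2)
  have hcard := Fintype.card_le_of_injective a hainj
  simp only [Fintype.card_fin] at hcard
  omega
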